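/- Under the permutation null distribution, for all integers 0 ≤ t1 < t2 ≤ n, the variance of U2^π(t1,t2) equals A(n − t2 + t1)·(r_d² − r0²) + B(n − t2 + t1)·(r1² − r0²). -/

import Mathlib

open Finset Function


open Finset

namespace RING

/-- `U1^π(t1,t2)`: sum of `R (π i) (π j)` over indices (1-based `i,j ∈ {1,…,n}`,
represented by `Fin n` with `i` standing for index `i+1`) with `t1 < i ≤ t2` and
`t1 < j ≤ t2`. -/
noncomputable def U1 (n : ℕ) (R : Fin n → Fin n → ℝ) (π : Equiv.Perm (Fin n))
    (t1 t2 : ℕ) : ℝ :=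
  ∑ i : Fin n, ∑ j : Fin n,
    if t1 ≤ (i : ℕ) ∧ (i : ℕ) < t2 ∧ t1 ≤ (j : ℕ) ∧ (j : ℕ) < t2 then R (π i) (π j) else 0

/-- `U2^π(t1,t2)`: sum of `R (π i) (π j)` over indices with `i ≤ t1` or `i > t2`,
and `j ≤ t1` or `j > t2`. -/
noncomputable def U2 (n : ℕ) (R : Fin n → Fin n → ℝ) (π : Equiv.Perm (Fin n))
    (t1 t2 : ℕ) : ℝ :=
  ∑ i : Fin n, ∑ j : Fin n,
    if ((i : ℕ) < t1 ∨ t2 ≤ (i : ℕ)) ∧ ((j : ℕ) < t1 ∨ t2 ≤ (j : ℕ)) then R (π i) (π j) else 0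

/-- Expectation under the permutation null distribution (uniform over all `n!`
permutations). -/
noncomputable def pexp (n : ℕ) (f : Equiv.Perm (Fin n) → ℝ) : ℝ :=
  (∑ π : Equiv.Perm (Fin n), f π) / (Nat.factorial n)

/-- Variance under the permutation null distribution. -/
noncomputable def pvar (n : ℕ) (f : Equiv.Perm (Fin n) → ℝ) : ℝ :=
  pexp n (fun π => (f π - pexp n f) ^ 2)

/-- Covariance under the permutation null distribution. -/
noncomputable def pcov (n : ℕ) (f g : Equiv.Perm (Fin n) → ℝ) : ℝ :=
  pexp n (fun π => (f π - pexp n f) * (g π - pexp n g))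

/-- `R̄_{i·} = (Σ_j R_{ij})/(n-1)`. -/
noncomputable def Rbar (n : ℕ) (R : Fin n → Fin n → ℝ) (i : Fin n) : ℝ :=
  (∑ j : Fin n, R i j) / ((n : ℝ) - 1)

/-- `r0 = (1/n) Σ_i R̄_{i·}`. -/
noncomputable def r0 (n : ℕ) (R : Fin n → Fin n → ℝ) : ℝ :=
  (∑ i : Fin n, Rbar n R i) / n

/-- `r1² = (1/n) Σ_i R̄_{i·}²`. -/
noncomputable def r1sq (n : ℕ) (R : Fin n → Fin n → ℝ) : ℝ :=
  (∑ i : Fin n, (Rbar n R i) ^ 2) / n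

/-- `r_d² = (1/(n(n-1))) Σ_i Σ_j R_{ij}²`. -/
noncomputable def rdsq (n : ℕ) (R : Fin n → Fin n → ℝ) : ℝ :=
  (∑ i : Fin n, ∑ j : Fin n, (R i j) ^ 2) / ((n : ℝ) * ((n : ℝ) - 1))

/-- `A(t) = 2t(t-1)(n-t)(n-t-1)/((n-2)(n-3))`. -/
noncomputable def A (n t : ℕ) : ℝ :=
  2 * (t : ℝ) * ((t : ℝ) - 1) * ((n : ℝ) - t) * ((n : ℝ) - t - 1) /
    (((n : ℝ) - 2) * ((n : ℝ) - 3))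

/-- `B(t) = 4t(n-t)(t-1)(t-2)(n-1)/((n-2)(n-3))`. -/
noncomputable def B (n t : ℕ) : ℝ :=
  4 * (t : ℝ) * ((n : ℝ) - t) * ((t : ℝ) - 1) * ((t : ℝ) - 2) * ((n : ℝ) - 1) /
    (((n : ℝ) - 2) * ((n : ℝ) - 3))

/-- `U_diff^π = U1^π − U2^π`. -/
noncomputable def Udiff (n : ℕ) (R : Fin n → Fin n → ℝ) (π : Equiv.Perm (Fin n))
    (t1 t2 : ℕ) : ℝ :=
  U1 n R π t1 t2 - U2 n R π t1 t2

/-- `U_w^π = ((n−t2+t1−1)·U1^π + (t2−t1−1)·U2^π)/(n−2)`. -/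
noncomputable def Uw (n : ℕ) (R : Fin n → Fin n → ℝ) (π : Equiv.Perm (Fin n))
    (t1 t2 : ℕ) : ℝ :=
  (((n : ℝ) - t2 + t1 - 1) * U1 n R π t1 t2 + ((t2 : ℝ) - t1 - 1) * U2 n R π t1 t2) /
    ((n : ℝ) - 2)

/-- Standardized `Z_w^π(t1,t2)`. -/
noncomputable def Zw (n : ℕ) (R : Fin n → Fin n → ℝ) (π : Equiv.Perm (Fin n))
    (t1 t2 : ℕ) : ℝ :=
  (Uw n R π t1 t2 - pexp n (fun σ => Uw n R σ t1 t2)) /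
    Real.sqrt (pvar n (fun σ => Uw n R σ t1 t2))

/-- Standardized `Z_diff^π(t1,t2)`. -/
noncomputable def Zdiff (n : ℕ) (R : Fin n → Fin n → ℝ) (π : Equiv.Perm (Fin n))
    (t1 t2 : ℕ) : ℝ :=
  (Udiff n R π t1 t2 - pexp n (fun σ => Udiff n R σ t1 t2)) /
    Real.sqrt (pvar n (fun σ => Udiff n R σ t1 t2))

end RING

open RING


lemma exists_perm_comp {k n : ℕ} (p q : Fin k ↪ Fin n) :
    ∃ σ : Equiv.Perm (Fin n), ∀ t, σ (p t) = q t := by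
  classical
  let e : {x // x ∈ Set.range ⇑p} ≃ {x // x ∈ Set.range ⇑q} :=
    p.toEquivRange.symm.trans q.toEquivRange
  refine ⟨Equiv.extendSubtype e, fun t => ?_⟩
  rw [Equiv.extendSubtype_apply_of_mem e (p t) (Set.mem_range_self t)]
  show ((q.toEquivRange (p.toEquivRange.symm ⟨p t, Set.mem_range_self t⟩)) : Fin n) = q t
  rw [Function.Embedding.toEquivRange_symm_apply_self]
  simp

lemma sum_perm_comp {k n : ℕ} (p : Fin k ↪ Fin n) (G : (Fin k → Fin n) → ℝ) :
    ∑ π : Equiv.Perm (Fin n), G (fun t => π (p t))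
      = (Nat.factorial (n - k) : ℝ) * ∑ q : Fin k ↪ Fin n, G ⇑q := by
  classical
  have hkn : k ≤ n := by simpa using Fintype.card_le_of_embedding p
  set Φ : Equiv.Perm (Fin n) → (Fin k ↪ Fin n) := fun π => p.trans π.toEmbedding with hΦ
  have key : ∀ q q' : Fin k ↪ Fin n,
      (univ.filter fun π => Φ π = q).card = (univ.filter fun π => Φ π = q').card := by
    intro q q'
    obtain ⟨σ, hσ⟩ := exists_perm_comp q q'
    apply Finset.card_bij (fun π _ => σ * π)
    · intro π hπ
      simp only [mem_filter, mem_univ, true_and] at hπ ⊢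
      ext t
      have : π (p t) = q t := by
        rw [← hπ]; rfl
      simp [hΦ, Function.Embedding.trans_apply, Equiv.Perm.mul_apply, this, hσ t]
    · intro π1 _ π2 _ h
      exact mul_left_cancel h
    · intro π hπ
      simp only [mem_filter, mem_univ, true_and] at hπ
      refine ⟨σ⁻¹ * π, ?_, by group⟩
      simp only [mem_filter, mem_univ, true_and]
      ext t
      have : π (p t) = q' t := by rw [← hπ]; rfl
      have h2 := hσ t
      simp only [hΦ, Function.Embedding.trans_apply, Equiv.toEmbedding_apply,
        Equiv.Perm.mul_apply, this]
      have h3 : σ⁻¹ (q' t) = q t := by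
        rw [Equiv.Perm.inv_def]
        exact (Equiv.symm_apply_eq σ).mpr h2.symm
      exact congrArg Fin.val h3
  have hfib : ∀ q : Fin k ↪ Fin n,
      (univ.filter fun π => Φ π = q).card = Nat.factorial (n - k) := by
    have htot : Nat.factorial n
        = ∑ q : Fin k ↪ Fin n, (univ.filter fun π => Φ π = q).card := by
      have h0 := Finset.card_eq_sum_card_fiberwise
        (f := Φ) (s := univ) (t := univ) (fun x _ => mem_univ (Φ x))
      simpa [Finset.card_univ, Fintype.card_perm] using h0
    intro q
    have hconst : ∀ q' : Fin k ↪ Fin n,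
        (univ.filter fun π => Φ π = q').card = (univ.filter fun π => Φ π = q).card :=
      fun q' => key q' q
    rw [Finset.sum_congr rfl (fun q' _ => hconst q'), Finset.sum_const, Finset.card_univ,
      Fintype.card_embedding_eq, Fintype.card_fin, Fintype.card_fin, smul_eq_mul] at htot
    have hd : 0 < n.descFactorial k := by
      rcases Nat.eq_zero_or_pos (n.descFactorial k) with h | h
      · exact absurd (Nat.descFactorial_eq_zero_iff_lt.mp h) (not_lt.mpr hkn)
      · exact h
    have h2 : Nat.descFactorial n k * Nat.factorial (n - k) = Nat.factorial n := by
      rw [mul_comm]; exact Nat.factorial_mul_descFactorial hkn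
    refine Nat.eq_of_mul_eq_mul_left hd ?_
    rw [← htot, h2]
  calc ∑ π : Equiv.Perm (Fin n), G (fun t => π (p t))
      = ∑ π : Equiv.Perm (Fin n), G ⇑(Φ π) := by
        refine Finset.sum_congr rfl fun π _ => ?_
        rfl
    _ = ∑ q : Fin k ↪ Fin n, ∑ π ∈ univ.filter fun π => Φ π = q, G ⇑q :=
        (Finset.sum_fiberwise' univ Φ (fun q => G ⇑q)).symm
    _ = ∑ q : Fin k ↪ Fin n, (Nat.factorial (n - k) : ℝ) * G ⇑q := by
        refine Finset.sum_congr rfl fun q _ => ?_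
        rw [Finset.sum_const, hfib q, nsmul_eq_mul]
    _ = _ := by rw [← Finset.mul_sum]

lemma sum_emb_prod_indicator {k n : ℕ} (S : Finset (Fin n)) :
    ∑ q : Fin k ↪ Fin n, (∏ t : Fin k, if q t ∈ S then (1:ℝ) else 0)
      = (S.card.descFactorial k : ℝ) := by
  classical
  have h1 : ∀ q : Fin k ↪ Fin n, (∏ t : Fin k, if q t ∈ S then (1:ℝ) else 0)
      = if (∀ t, q t ∈ S) then 1 else 0 := by
    intro q
    by_cases h : ∀ t, q t ∈ S
    · simp [h]
    · push_neg at h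
      obtain ⟨t, ht⟩ := h
      rw [if_neg (by push_neg; exact ⟨t, ht⟩)]
      exact Finset.prod_eq_zero (mem_univ t) (by simp [ht])
  simp_rw [h1]
  rw [Finset.sum_boole]
  congr 1
  have E : {q : Fin k ↪ Fin n // ∀ t, q t ∈ S} ≃ (Fin k ↪ {x : Fin n // x ∈ S}) :=
    { toFun := fun q => ⟨fun t => ⟨q.1 t, q.2 t⟩,
        fun t1 t2 h => q.1.injective (congrArg Subtype.val h)⟩
      invFun := fun q => ⟨q.trans (Function.Embedding.subtype _), fun t => (q t).2⟩
      left_inv := fun q => by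
        apply Subtype.ext
        ext t
        rfl
      right_inv := fun q => by
        ext t
        rfl }
  have hc := Fintype.card_congr E
  rw [Fintype.card_embedding_eq, Fintype.card_fin, Fintype.card_coe] at hc
  rw [← hc, Fintype.card_subtype]

lemma cast_df2 (m : ℕ) : (m.descFactorial 2 : ℝ) = (m:ℝ) * ((m:ℝ) - 1) := by
  match m with
  | 0 => norm_num [Nat.descFactorial_succ, Nat.descFactorial_zero]
  | (m+1) =>
    simp [Nat.descFactorial_succ, Nat.descFactorial_zero]
    push_cast
    ring

lemma cast_df3 (m : ℕ) : (m.descFactorial 3 : ℝ) = (m:ℝ) * ((m:ℝ) - 1) * ((m:ℝ) - 2) := by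
  match m with
  | 0 => norm_num [Nat.descFactorial_succ, Nat.descFactorial_zero]
  | 1 => norm_num [Nat.descFactorial_succ, Nat.descFactorial_zero]
  | (m+2) =>
    simp [Nat.descFactorial_succ, Nat.descFactorial_zero]
    push_cast
    ring

lemma cast_df4 (m : ℕ) :
    (m.descFactorial 4 : ℝ) = (m:ℝ) * ((m:ℝ) - 1) * ((m:ℝ) - 2) * ((m:ℝ) - 3) := by
  match m with
  | 0 => norm_num [Nat.descFactorial_succ, Nat.descFactorial_zero]
  | 1 => norm_num [Nat.descFactorial_succ, Nat.descFactorial_zero]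
  | 2 => norm_num [Nat.descFactorial_succ, Nat.descFactorial_zero]
  | (m+3) =>
    simp [Nat.descFactorial_succ, Nat.descFactorial_zero]
    push_cast
    ring

lemma M4_eq {n : ℕ} (u : Fin n → ℝ) (hu : ∀ x, u x * u x = u x)
    (E2 E3 E4 : ℝ)
    (hE2 : ∀ a b : Fin n, a ≠ b →
      ∑ π : Equiv.Perm (Fin n), u (π a) * u (π b) = E2)
    (hE3 : ∀ a b c : Fin n, a ≠ b → a ≠ c → b ≠ c →
      ∑ π : Equiv.Perm (Fin n), u (π a) * u (π b) * u (π c) = E3)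
    (hE4 : ∀ a b c d : Fin n, a ≠ b → a ≠ c → a ≠ d → b ≠ c → b ≠ d → c ≠ d →
      ∑ π : Equiv.Perm (Fin n), u (π a) * u (π b) * u (π c) * u (π d) = E4)
    (a b c d : Fin n) (hab : a ≠ b) (hcd : c ≠ d) :
    ∑ π : Equiv.Perm (Fin n), u (π a) * u (π b) * u (π c) * u (π d)
      = E4 + ((if a = c then (1:ℝ) else 0) + (if a = d then (1:ℝ) else 0)
            + (if b = c then (1:ℝ) else 0) + (if b = d then (1:ℝ) else 0)) * (E3 - E4)
        + ((if a = c then (1:ℝ) else 0) * (if b = d then (1:ℝ) else 0)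
            + (if a = d then (1:ℝ) else 0) * (if b = c then (1:ℝ) else 0))
            * (E2 - 2*E3 + E4) := by
  by_cases hac : a = c
  · subst hac
    have hbc : ¬ (b = a) := fun h => hab h.symm
    have had : ¬ (a = d) := hcd
    by_cases hbd : b = d
    · subst hbd
      have h1 : ∀ π : Equiv.Perm (Fin n),
          u (π a) * u (π b) * u (π a) * u (π b) = u (π a) * u (π b) := by
        intro π
        calc u (π a) * u (π b) * u (π a) * u (π b)
            = (u (π a) * u (π a)) * (u (π b) * u (π b)) := by ring
          _ = u (π a) * u (π b) := by rw [hu, hu]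
      rw [Finset.sum_congr rfl fun π _ => h1 π, hE2 a b hab]
      simp only [if_pos rfl, if_neg had, if_neg hbc]
      norm_num
      ring
    · have h1 : ∀ π : Equiv.Perm (Fin n),
          u (π a) * u (π b) * u (π a) * u (π d) = u (π a) * u (π b) * u (π d) := by
        intro π
        calc u (π a) * u (π b) * u (π a) * u (π d)
            = (u (π a) * u (π a)) * u (π b) * u (π d) := by ring
          _ = _ := by rw [hu]
      rw [Finset.sum_congr rfl fun π _ => h1 π, hE3 a b d hab had hbd]
      simp only [if_pos rfl, if_neg had, if_neg hbc, if_neg hbd]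
      norm_num
  · by_cases had : a = d
    · subst had
      have hbd : ¬ (b = a) := fun h => hab h.symm
      by_cases hbc : b = c
      · subst hbc
        have h1 : ∀ π : Equiv.Perm (Fin n),
            u (π a) * u (π b) * u (π b) * u (π a) = u (π a) * u (π b) := by
          intro π
          calc u (π a) * u (π b) * u (π b) * u (π a)
              = (u (π a) * u (π a)) * (u (π b) * u (π b)) := by ring
            _ = u (π a) * u (π b) := by rw [hu, hu]
        rw [Finset.sum_congr rfl fun π _ => h1 π, hE2 a b hab]
        simp only [if_pos rfl, if_neg hac, if_neg hbd]
        norm_num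
        ring
      · have h1 : ∀ π : Equiv.Perm (Fin n),
            u (π a) * u (π b) * u (π c) * u (π a) = u (π a) * u (π b) * u (π c) := by
          intro π
          calc u (π a) * u (π b) * u (π c) * u (π a)
              = (u (π a) * u (π a)) * u (π b) * u (π c) := by ring
            _ = _ := by rw [hu]
        rw [Finset.sum_congr rfl fun π _ => h1 π, hE3 a b c hab hac hbc]
        simp only [if_pos rfl, if_neg hac, if_neg hbd, if_neg hbc]
        norm_num
    · by_cases hbc : b = c
      · subst hbc
        have hbd : ¬ (b = d) := hcd
        have h1 : ∀ π : Equiv.Perm (Fin n),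
            u (π a) * u (π b) * u (π b) * u (π d) = u (π a) * u (π b) * u (π d) := by
          intro π
          calc u (π a) * u (π b) * u (π b) * u (π d)
              = u (π a) * (u (π b) * u (π b)) * u (π d) := by ring
            _ = _ := by rw [hu]
        rw [Finset.sum_congr rfl fun π _ => h1 π, hE3 a b d hab had hbd]
        simp only [if_pos rfl, if_neg hac, if_neg had, if_neg hbd]
        norm_num
      · by_cases hbd : b = d
        · subst hbd
          have h1 : ∀ π : Equiv.Perm (Fin n),
              u (π a) * u (π b) * u (π c) * u (π b) = u (π a) * u (π b) * u (π c) := by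
            intro π
            calc u (π a) * u (π b) * u (π c) * u (π b)
                = u (π a) * (u (π b) * u (π b)) * u (π c) := by ring
              _ = _ := by rw [hu]
          rw [Finset.sum_congr rfl fun π _ => h1 π, hE3 a b c hab hac hbc]
          simp only [if_pos rfl, if_neg hac, if_neg hbc, if_neg hab]
          norm_num
        · rw [hE4 a b c d hab hac had hbc hbd hcd]
          simp only [if_neg hac, if_neg had, if_neg hbc, if_neg hbd]
          ring



lemma sumE2 {n : ℕ} (S : Finset (Fin n)) {a b : Fin n} (hab : a ≠ b) :
    ∑ π : Equiv.Perm (Fin n),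
      (if π a ∈ S then (1:ℝ) else 0) * (if π b ∈ S then (1:ℝ) else 0)
    = (Nat.factorial (n - 2) : ℝ) * (S.card.descFactorial 2 : ℝ) := by
  have hinj : Function.Injective ![a, b] := by
    intro s t hst
    fin_cases s <;> fin_cases t <;> simp_all
  have h := sum_perm_comp (⟨![a, b], hinj⟩ : Fin 2 ↪ Fin n)
    (fun f => (if f 0 ∈ S then (1:ℝ) else 0) * (if f 1 ∈ S then (1:ℝ) else 0))
  simp only [Function.Embedding.coeFn_mk, Matrix.cons_val_zero, Matrix.cons_val_one,
    Matrix.head_cons] at h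
  refine h.trans ?_
  congr 1
  rw [← sum_emb_prod_indicator S]
  refine Finset.sum_congr rfl fun q _ => ?_
  rw [Fin.prod_univ_two]

lemma sumE3 {n : ℕ} (S : Finset (Fin n)) {a b c : Fin n}
    (hab : a ≠ b) (hac : a ≠ c) (hbc : b ≠ c) :
    ∑ π : Equiv.Perm (Fin n),
      (if π a ∈ S then (1:ℝ) else 0) * (if π b ∈ S then (1:ℝ) else 0)
        * (if π c ∈ S then (1:ℝ) else 0)
    = (Nat.factorial (n - 3) : ℝ) * (S.card.descFactorial 3 : ℝ) := by
  have hinj : Function.Injective ![a, b, c] := by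
    intro s t hst
    fin_cases s <;> fin_cases t <;> simp_all
  have h := sum_perm_comp (⟨![a, b, c], hinj⟩ : Fin 3 ↪ Fin n)
    (fun f => (if f 0 ∈ S then (1:ℝ) else 0) * (if f 1 ∈ S then (1:ℝ) else 0)
      * (if f 2 ∈ S then (1:ℝ) else 0))
  simp only [Function.Embedding.coeFn_mk, Matrix.cons_val_zero, Matrix.cons_val_one,
    Matrix.head_cons, Matrix.cons_val_two, Matrix.tail_cons] at h
  refine h.trans ?_
  congr 1
  rw [← sum_emb_prod_indicator S]
  refine Finset.sum_congr rfl fun q _ => ?_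
  rw [Fin.prod_univ_three]

lemma sumE4 {n : ℕ} (S : Finset (Fin n)) {a b c d : Fin n}
    (hab : a ≠ b) (hac : a ≠ c) (had : a ≠ d) (hbc : b ≠ c) (hbd : b ≠ d) (hcd : c ≠ d) :
    ∑ π : Equiv.Perm (Fin n),
      (if π a ∈ S then (1:ℝ) else 0) * (if π b ∈ S then (1:ℝ) else 0)
        * (if π c ∈ S then (1:ℝ) else 0) * (if π d ∈ S then (1:ℝ) else 0)
    = (Nat.factorial (n - 4) : ℝ) * (S.card.descFactorial 4 : ℝ) := by
  have hinj : Function.Injective ![a, b, c, d] := by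
    intro s t hst
    fin_cases s <;> fin_cases t <;> simp_all
  have h := sum_perm_comp (⟨![a, b, c, d], hinj⟩ : Fin 4 ↪ Fin n)
    (fun f => (if f 0 ∈ S then (1:ℝ) else 0) * (if f 1 ∈ S then (1:ℝ) else 0)
      * (if f 2 ∈ S then (1:ℝ) else 0) * (if f 3 ∈ S then (1:ℝ) else 0))
  simp only [Function.Embedding.coeFn_mk, Matrix.cons_val_zero, Matrix.cons_val_one,
    Matrix.head_cons, Matrix.cons_val_two, Matrix.tail_cons, Matrix.cons_val_three] at h
  refine h.trans ?_
  congr 1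
  rw [← sum_emb_prod_indicator S]
  refine Finset.sum_congr rfl fun q _ => ?_
  rw [Fin.prod_univ_four]
lemma fact_cast4 {n : ℕ} (hn : 4 ≤ n) :
    ((n.factorial : ℝ)) = (n:ℝ) * ((n:ℝ)-1) * ((n:ℝ)-2) * ((n:ℝ)-3) * ((n-4).factorial : ℝ) := by
  obtain ⟨l, rfl⟩ : ∃ l, n = l + 4 := ⟨n - 4, by omega⟩
  rw [show l + 4 - 4 = l from by omega]
  rw [show l + 4 = l + 3 + 1 from rfl, Nat.factorial_succ,
    show l + 3 = l + 2 + 1 from rfl, Nat.factorial_succ,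
    show l + 2 = l + 1 + 1 from rfl, Nat.factorial_succ, Nat.factorial_succ]
  push_cast
  ring

lemma fact_cast3 {n : ℕ} (hn : 4 ≤ n) :
    (((n-3).factorial : ℝ)) = ((n:ℝ)-3) * ((n-4).factorial : ℝ) := by
  obtain ⟨l, rfl⟩ : ∃ l, n = l + 4 := ⟨n - 4, by omega⟩
  rw [show l + 4 - 4 = l from by omega, show l + 4 - 3 = l + 1 from by omega,
    Nat.factorial_succ]
  push_cast
  ring

lemma fact_cast2 {n : ℕ} (hn : 4 ≤ n) :
    (((n-2).factorial : ℝ)) = ((n:ℝ)-2) * ((n:ℝ)-3) * ((n-4).factorial : ℝ) := by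
  obtain ⟨l, rfl⟩ : ∃ l, n = l + 4 := ⟨n - 4, by omega⟩
  rw [show l + 4 - 4 = l from by omega, show l + 4 - 2 = l + 1 + 1 from by omega,
    Nat.factorial_succ, Nat.factorial_succ]
  push_cast
  ring

lemma pvar_eq (n : ℕ) (f : Equiv.Perm (Fin n) → ℝ) :
    RING.pvar n f = (∑ π : Equiv.Perm (Fin n), f π ^ 2) / (n.factorial : ℝ)
      - ((∑ π : Equiv.Perm (Fin n), f π) / (n.factorial : ℝ)) ^ 2 := by
  have hfac : ((n.factorial : ℝ)) ≠ 0 := Nat.cast_ne_zero.mpr (Nat.factorial_ne_zero n)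
  unfold RING.pvar RING.pexp
  have h1 : ∀ π : Equiv.Perm (Fin n),
      (f π - (∑ σ : Equiv.Perm (Fin n), f σ) / (n.factorial : ℝ)) ^ 2
      = f π ^ 2 - 2 * ((∑ σ : Equiv.Perm (Fin n), f σ) / (n.factorial : ℝ)) * f π
        + ((∑ σ : Equiv.Perm (Fin n), f σ) / (n.factorial : ℝ)) ^ 2 := fun π => by ring
  rw [Finset.sum_congr rfl fun π _ => h1 π]
  rw [Finset.sum_add_distrib, Finset.sum_sub_distrib, ← Finset.mul_sum, Finset.sum_const,
    Finset.card_univ, Fintype.card_perm, Fintype.card_fin, nsmul_eq_mul]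
  field_simp
  ring

set_option maxHeartbeats 2000000 in
theorem stmt3 (n : ℕ) (hn : 4 ≤ n) (R : Fin n → Fin n → ℝ)
    (hsym : ∀ i j, R i j = R j i) (hdiag : ∀ i, R i i = 0)
    (t1 t2 : ℕ) (h12 : t1 < t2) (h2n : t2 ≤ n) :
    pvar n (fun π => U2 n R π t1 t2)
      = A n (n - t2 + t1) * (rdsq n R - (r0 n R) ^ 2)
        + B n (n - t2 + t1) * (r1sq n R - (r0 n R) ^ 2) := by
  classical
  have hfac : ((n.factorial : ℝ)) ≠ 0 := Nat.cast_ne_zero.mpr (Nat.factorial_ne_zero n)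
  set m : ℕ := n - t2 + t1 with hm
  set S : Finset (Fin n) := univ.filter (fun i : Fin n => (i:ℕ) < t1 ∨ t2 ≤ (i:ℕ)) with hS
  set u : Fin n → ℝ := fun x => if x ∈ S then 1 else 0 with hudef
  have huid : ∀ x, u x * u x = u x := by
    intro x; by_cases h : x ∈ S <;> simp [hudef, h]
  have hScard : S.card = m := by
    have h1 : (univ.filter (fun i : Fin n => (i:ℕ) < t1)).card = t1 := by
      rw [Finset.card_filter]
      rw [Fin.sum_univ_eq_sum_range (fun i => if i < t1 then (1:ℕ) else 0)]
      rw [← Finset.card_filter]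
      have he : (Finset.range n).filter (fun i => i < t1) = Finset.range t1 := by
        ext i; simp [Finset.mem_range]; omega
      rw [he, Finset.card_range]
    have h2 : (univ.filter (fun i : Fin n => t2 ≤ (i:ℕ))).card = n - t2 := by
      rw [Finset.card_filter]
      rw [Fin.sum_univ_eq_sum_range (fun i => if t2 ≤ i then (1:ℕ) else 0)]
      rw [← Finset.card_filter]
      have he : (Finset.range n).filter (fun i => t2 ≤ i) = Finset.Ico t2 n := by
        ext i; simp [Finset.mem_range, Finset.mem_Ico]; omega
      rw [he, Nat.card_Ico]
    have hdisj : Disjoint (univ.filter (fun i : Fin n => (i:ℕ) < t1))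
        (univ.filter (fun i : Fin n => t2 ≤ (i:ℕ))) := by
      rw [Finset.disjoint_left]
      intro i hi1 hi2
      simp only [mem_filter] at hi1 hi2
      omega
    rw [hS, Finset.filter_or, Finset.card_union_of_disjoint hdisj, h1, h2]
    omega
  -- E-values
  set E2v : ℝ := (Nat.factorial (n-2) : ℝ) * (m.descFactorial 2 : ℝ) with hE2v
  set E3v : ℝ := (Nat.factorial (n-3) : ℝ) * (m.descFactorial 3 : ℝ) with hE3v
  set E4v : ℝ := (Nat.factorial (n-4) : ℝ) * (m.descFactorial 4 : ℝ) with hE4v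
  have hE2 : ∀ a b : Fin n, a ≠ b →
      ∑ π : Equiv.Perm (Fin n), u (π a) * u (π b) = E2v := by
    intro a b hab
    rw [hE2v, ← hScard]
    exact sumE2 S hab
  have hE3 : ∀ a b c : Fin n, a ≠ b → a ≠ c → b ≠ c →
      ∑ π : Equiv.Perm (Fin n), u (π a) * u (π b) * u (π c) = E3v := by
    intro a b c hab hac hbc
    rw [hE3v, ← hScard]
    exact sumE3 S hab hac hbc
  have hE4 : ∀ a b c d : Fin n, a ≠ b → a ≠ c → a ≠ d → b ≠ c → b ≠ d → c ≠ d →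
      ∑ π : Equiv.Perm (Fin n), u (π a) * u (π b) * u (π c) * u (π d) = E4v := by
    intro a b c d hab hac had hbc hbd hcd
    rw [hE4v, ← hScard]
    exact sumE4 S hab hac had hbc hbd hcd
  -- V
  set V : Equiv.Perm (Fin n) → ℝ :=
    fun σ => ∑ a : Fin n, ∑ b : Fin n, u (σ a) * u (σ b) * R a b with hV
  have hU2V : ∀ π : Equiv.Perm (Fin n), U2 n R π t1 t2 = V π⁻¹ := by
    intro π
    calc U2 n R π t1 t2
        = ∑ i : Fin n, ∑ j : Fin n, u i * u j * R (π i) (π j) := by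
          unfold RING.U2
          refine Finset.sum_congr rfl fun i _ => Finset.sum_congr rfl fun j _ => ?_
          by_cases hi : (i:ℕ) < t1 ∨ t2 ≤ (i:ℕ) <;>
            by_cases hj : (j:ℕ) < t1 ∨ t2 ≤ (j:ℕ) <;>
            simp [hudef, hS, mem_filter, hi, hj]
      _ = ∑ i : Fin n, ∑ j : Fin n,
            u (π⁻¹ (π i)) * u (π⁻¹ (π j)) * R (π i) (π j) := by
          simp only [Equiv.Perm.inv_def, Equiv.symm_apply_apply]
      _ = ∑ i : Fin n, ∑ b : Fin n, u (π⁻¹ (π i)) * u (π⁻¹ b) * R (π i) b := by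
          refine Finset.sum_congr rfl fun i _ => ?_
          exact Equiv.sum_comp π (fun b => u (π⁻¹ (π i)) * u (π⁻¹ b) * R (π i) b)
      _ = ∑ a : Fin n, ∑ b : Fin n, u (π⁻¹ a) * u (π⁻¹ b) * R a b :=
          Equiv.sum_comp π (fun a => ∑ b : Fin n, u (π⁻¹ a) * u (π⁻¹ b) * R a b)
      _ = V π⁻¹ := rfl
  -- basic sums
  have hrow : ∀ a : Fin n, (∑ c : Fin n, R c a) = ∑ b : Fin n, R a b := by
    intro a
    exact Finset.sum_congr rfl fun c _ => hsym c a
  -- first moment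
  have hM1 : ∑ π : Equiv.Perm (Fin n), V π
      = E2v * (∑ a : Fin n, ∑ b : Fin n, R a b) := by
    calc ∑ π : Equiv.Perm (Fin n), V π
        = ∑ a : Fin n, ∑ π : Equiv.Perm (Fin n), ∑ b : Fin n,
            u (π a) * u (π b) * R a b := Finset.sum_comm
      _ = ∑ a : Fin n, ∑ b : Fin n, ∑ π : Equiv.Perm (Fin n),
            u (π a) * u (π b) * R a b := by
          exact Finset.sum_congr rfl fun a _ => Finset.sum_comm
      _ = ∑ a : Fin n, ∑ b : Fin n,
            (∑ π : Equiv.Perm (Fin n), u (π a) * u (π b)) * R a b := by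
          refine Finset.sum_congr rfl fun a _ => Finset.sum_congr rfl fun b _ => ?_
          rw [Finset.sum_mul]
      _ = ∑ a : Fin n, ∑ b : Fin n, E2v * R a b := by
          refine Finset.sum_congr rfl fun a _ => Finset.sum_congr rfl fun b _ => ?_
          by_cases hab : a = b
          · subst hab; rw [hdiag a]; ring
          · rw [hE2 a b hab]
      _ = E2v * (∑ a : Fin n, ∑ b : Fin n, R a b) := by
          simp [Finset.mul_sum]
  -- key pointwise identity
  have key : ∀ a b c d : Fin n,
      (∑ π : Equiv.Perm (Fin n), u (π a) * u (π b) * u (π c) * u (π d)) * (R a b * R c d)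
      = E4v * (R a b * R c d)
        + (E3v - E4v) * ((if a = c then (1:ℝ) else 0) * (R a b * R c d))
        + (E3v - E4v) * ((if a = d then (1:ℝ) else 0) * (R a b * R c d))
        + (E3v - E4v) * ((if b = c then (1:ℝ) else 0) * (R a b * R c d))
        + (E3v - E4v) * ((if b = d then (1:ℝ) else 0) * (R a b * R c d))
        + (E2v - 2*E3v + E4v)
            * ((if a = c then (1:ℝ) else 0) * ((if b = d then (1:ℝ) else 0) * (R a b * R c d)))
        + (E2v - 2*E3v + E4v)
            * ((if a = d then (1:ℝ) else 0) * ((if b = c then (1:ℝ) else 0) * (R a b * R c d))) := by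
    intro a b c d
    by_cases hab : a = b
    · subst hab; rw [hdiag a]; simp
    · by_cases hcd : c = d
      · subst hcd; rw [hdiag c]; simp
      · rw [M4_eq u huid E2v E3v E4v hE2 hE3 hE4 a b c d hab hcd]
        ring
  have hVsq : ∀ π : Equiv.Perm (Fin n), (V π)^2
      = ∑ a : Fin n, ∑ c : Fin n, ∑ b : Fin n, ∑ d : Fin n,
          (u (π a) * u (π b) * u (π c) * u (π d)) * (R a b * R c d) := by
    intro π
    rw [sq]
    show (∑ a : Fin n, ∑ b : Fin n, u (π a) * u (π b) * R a b)
        * (∑ a : Fin n, ∑ b : Fin n, u (π a) * u (π b) * R a b) = _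
    rw [Finset.sum_mul_sum]
    refine Finset.sum_congr rfl fun a _ => Finset.sum_congr rfl fun c _ => ?_
    rw [Finset.sum_mul_sum]
    refine Finset.sum_congr rfl fun b _ => Finset.sum_congr rfl fun d _ => ?_
    ring
  have hM2 : ∑ π : Equiv.Perm (Fin n), (V π)^2
      = ∑ a : Fin n, ∑ c : Fin n, ∑ b : Fin n, ∑ d : Fin n,
          (∑ π : Equiv.Perm (Fin n), u (π a) * u (π b) * u (π c) * u (π d))
            * (R a b * R c d) := by
    rw [Finset.sum_congr rfl fun π _ => hVsq π]
    rw [Finset.sum_comm]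
    refine Finset.sum_congr rfl fun a _ => ?_
    rw [Finset.sum_comm]
    refine Finset.sum_congr rfl fun c _ => ?_
    rw [Finset.sum_comm]
    refine Finset.sum_congr rfl fun b _ => ?_
    rw [Finset.sum_comm]
    refine Finset.sum_congr rfl fun d _ => ?_
    rw [Finset.sum_mul]
  rw [Finset.sum_congr rfl fun a _ => Finset.sum_congr rfl fun c _ =>
    Finset.sum_congr rfl fun b _ => Finset.sum_congr rfl fun d _ => key a b c d] at hM2
  have pull : ∀ (e : ℝ) (g : Fin n → Fin n → Fin n → Fin n → ℝ),
      (∑ a : Fin n, ∑ c : Fin n, ∑ b : Fin n, ∑ d : Fin n, e * g a c b d)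
        = e * ∑ a : Fin n, ∑ c : Fin n, ∑ b : Fin n, ∑ d : Fin n, g a c b d := by
    intro e g
    simp only [← Finset.mul_sum]
  simp only [Finset.sum_add_distrib] at hM2
  simp only [pull] at hM2
  -- pieces
  have PA : ∑ a : Fin n, ∑ c : Fin n, ∑ b : Fin n, ∑ d : Fin n, R a b * R c d
      = (∑ a : Fin n, ∑ b : Fin n, R a b)^2 := by
    have h1 : ∀ a c : Fin n, (∑ b : Fin n, ∑ d : Fin n, R a b * R c d)
        = (∑ b : Fin n, R a b) * (∑ d : Fin n, R c d) :=
      fun a c => (Finset.sum_mul_sum _ _ _ _).symm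
    rw [Finset.sum_congr rfl fun a _ => Finset.sum_congr rfl fun c _ => h1 a c,
      ← Finset.sum_mul_sum, sq]
  have hfold : ∀ a c : Fin n, ∀ g : Fin n → Fin n → ℝ, ∀ e : ℝ,
      (∑ b : Fin n, ∑ d : Fin n, e * (g b d)) = e * ∑ b : Fin n, ∑ d : Fin n, g b d := by
    intro a c g e
    simp only [← Finset.mul_sum]
  have PB1 : ∑ a : Fin n, ∑ c : Fin n, ∑ b : Fin n, ∑ d : Fin n,
        (if a = c then (1:ℝ) else 0) * (R a b * R c d)
      = ∑ a : Fin n, (∑ b : Fin n, R a b)^2 := by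
    refine Finset.sum_congr rfl fun a _ => ?_
    calc ∑ c : Fin n, ∑ b : Fin n, ∑ d : Fin n, (if a = c then (1:ℝ) else 0) * (R a b * R c d)
        = ∑ c : Fin n, (if a = c then (1:ℝ) else 0)
            * ((∑ b : Fin n, R a b) * (∑ d : Fin n, R c d)) := by
          refine Finset.sum_congr rfl fun c _ => ?_
          rw [hfold a c _ _, ← Finset.sum_mul_sum]
      _ = (∑ b : Fin n, R a b) * (∑ d : Fin n, R a d) := by
          simp [boole_mul, Finset.sum_ite_eq]
      _ = (∑ b : Fin n, R a b)^2 := by rw [sq]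
  have PB2 : ∑ a : Fin n, ∑ c : Fin n, ∑ b : Fin n, ∑ d : Fin n,
        (if a = d then (1:ℝ) else 0) * (R a b * R c d)
      = ∑ a : Fin n, (∑ b : Fin n, R a b)^2 := by
    refine Finset.sum_congr rfl fun a _ => ?_
    calc ∑ c : Fin n, ∑ b : Fin n, ∑ d : Fin n, (if a = d then (1:ℝ) else 0) * (R a b * R c d)
        = ∑ c : Fin n, ∑ b : Fin n, R a b * R c a := by
          refine Finset.sum_congr rfl fun c _ => Finset.sum_congr rfl fun b _ => ?_
          simp [boole_mul, Finset.sum_ite_eq]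
      _ = ∑ c : Fin n, (∑ b : Fin n, R a b) * R c a := by
          refine Finset.sum_congr rfl fun c _ => ?_
          rw [Finset.sum_mul]
      _ = (∑ b : Fin n, R a b) * (∑ c : Fin n, R c a) := by rw [Finset.mul_sum]
      _ = (∑ b : Fin n, R a b)^2 := by rw [hrow a, sq]
  have PB3 : ∑ a : Fin n, ∑ c : Fin n, ∑ b : Fin n, ∑ d : Fin n,
        (if b = c then (1:ℝ) else 0) * (R a b * R c d)
      = ∑ a : Fin n, (∑ b : Fin n, R a b)^2 := by
    calc ∑ a : Fin n, ∑ c : Fin n, ∑ b : Fin n, ∑ d : Fin n,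
          (if b = c then (1:ℝ) else 0) * (R a b * R c d)
        = ∑ a : Fin n, ∑ c : Fin n, R a c * (∑ d : Fin n, R c d) := by
          refine Finset.sum_congr rfl fun a _ => Finset.sum_congr rfl fun c _ => ?_
          calc ∑ b : Fin n, ∑ d : Fin n, (if b = c then (1:ℝ) else 0) * (R a b * R c d)
              = ∑ b : Fin n, (if b = c then (1:ℝ) else 0) * (R a b * ∑ d : Fin n, R c d) := by
                refine Finset.sum_congr rfl fun b _ => ?_
                rw [← Finset.mul_sum, ← Finset.mul_sum]
            _ = R a c * (∑ d : Fin n, R c d) := by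
                simp [boole_mul, Finset.sum_ite_eq']
      _ = ∑ c : Fin n, ∑ a : Fin n, R a c * (∑ d : Fin n, R c d) := Finset.sum_comm
      _ = ∑ c : Fin n, (∑ a : Fin n, R a c) * (∑ d : Fin n, R c d) := by
          refine Finset.sum_congr rfl fun c _ => ?_
          rw [Finset.sum_mul]
      _ = ∑ a : Fin n, (∑ b : Fin n, R a b)^2 := by
          refine Finset.sum_congr rfl fun c _ => ?_
          rw [hrow c, sq]
  have PB4 : ∑ a : Fin n, ∑ c : Fin n, ∑ b : Fin n, ∑ d : Fin n,
        (if b = d then (1:ℝ) else 0) * (R a b * R c d)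
      = ∑ a : Fin n, (∑ b : Fin n, R a b)^2 := by
    calc ∑ a : Fin n, ∑ c : Fin n, ∑ b : Fin n, ∑ d : Fin n,
          (if b = d then (1:ℝ) else 0) * (R a b * R c d)
        = ∑ a : Fin n, ∑ c : Fin n, ∑ b : Fin n, R a b * R c b := by
          refine Finset.sum_congr rfl fun a _ => Finset.sum_congr rfl fun c _ =>
            Finset.sum_congr rfl fun b _ => ?_
          simp [boole_mul, Finset.sum_ite_eq]
      _ = ∑ a : Fin n, ∑ b : Fin n, ∑ c : Fin n, R a b * R c b := by
          refine Finset.sum_congr rfl fun a _ => ?_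
          exact Finset.sum_comm
      _ = ∑ a : Fin n, ∑ b : Fin n, R a b * (∑ c : Fin n, R c b) := by
          refine Finset.sum_congr rfl fun a _ => Finset.sum_congr rfl fun b _ => ?_
          rw [Finset.mul_sum]
      _ = ∑ b : Fin n, ∑ a : Fin n, R a b * (∑ c : Fin n, R c b) := Finset.sum_comm
      _ = ∑ b : Fin n, (∑ a : Fin n, R a b) * (∑ c : Fin n, R c b) := by
          refine Finset.sum_congr rfl fun b _ => ?_
          rw [Finset.sum_mul]
      _ = ∑ a : Fin n, (∑ b : Fin n, R a b)^2 := by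
          refine Finset.sum_congr rfl fun b _ => ?_
          rw [hrow b, sq]
  have PC1 : ∑ a : Fin n, ∑ c : Fin n, ∑ b : Fin n, ∑ d : Fin n,
        (if a = c then (1:ℝ) else 0) * ((if b = d then (1:ℝ) else 0) * (R a b * R c d))
      = ∑ a : Fin n, ∑ b : Fin n, (R a b)^2 := by
    refine Finset.sum_congr rfl fun a _ => ?_
    calc ∑ c : Fin n, ∑ b : Fin n, ∑ d : Fin n,
          (if a = c then (1:ℝ) else 0) * ((if b = d then (1:ℝ) else 0) * (R a b * R c d))
        = ∑ c : Fin n, (if a = c then (∑ b : Fin n, R a b * R c b) else 0) := by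
          refine Finset.sum_congr rfl fun c _ => ?_
          by_cases hac : a = c
          · simp only [hac, if_pos rfl, one_mul]
            refine Finset.sum_congr rfl fun b _ => ?_
            simp [boole_mul, Finset.sum_ite_eq]
          · simp [hac]
      _ = ∑ b : Fin n, R a b * R a b := by rw [Finset.sum_ite_eq]; simp
      _ = ∑ b : Fin n, (R a b)^2 := by
          refine Finset.sum_congr rfl fun b _ => (sq (R a b)).symm
  have PC2 : ∑ a : Fin n, ∑ c : Fin n, ∑ b : Fin n, ∑ d : Fin n,
        (if a = d then (1:ℝ) else 0) * ((if b = c then (1:ℝ) else 0) * (R a b * R c d))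
      = ∑ a : Fin n, ∑ b : Fin n, (R a b)^2 := by
    refine Finset.sum_congr rfl fun a _ => ?_
    calc ∑ c : Fin n, ∑ b : Fin n, ∑ d : Fin n,
          (if a = d then (1:ℝ) else 0) * ((if b = c then (1:ℝ) else 0) * (R a b * R c d))
        = ∑ c : Fin n, ∑ b : Fin n, (if b = c then (1:ℝ) else 0) * (R a b * R c a) := by
          refine Finset.sum_congr rfl fun c _ => Finset.sum_congr rfl fun b _ => ?_
          calc ∑ d : Fin n,
                (if a = d then (1:ℝ) else 0) * ((if b = c then (1:ℝ) else 0) * (R a b * R c d))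
              = ∑ d : Fin n,
                (if a = d then ((if b = c then (1:ℝ) else 0) * (R a b * R c d)) else 0) := by
                refine Finset.sum_congr rfl fun d _ => ?_
                rw [boole_mul]
            _ = (if b = c then (1:ℝ) else 0) * (R a b * R c a) := by
                rw [Finset.sum_ite_eq]; simp
      _ = ∑ c : Fin n, R a c * R c a := by
          refine Finset.sum_congr rfl fun c _ => ?_
          simp [boole_mul, Finset.sum_ite_eq']
      _ = ∑ b : Fin n, (R a b)^2 := by
          refine Finset.sum_congr rfl fun c _ => ?_
          rw [← hsym a c, sq]
  rw [PA, PB1, PB2, PB3, PB4, PC1, PC2] at hM2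
  -- transfer to U2 sums
  have hinvsum : ∀ g : Equiv.Perm (Fin n) → ℝ,
      ∑ π : Equiv.Perm (Fin n), g π⁻¹ = ∑ π : Equiv.Perm (Fin n), g π := by
    intro g
    exact Equiv.sum_comp (Equiv.inv (Equiv.Perm (Fin n))) g
  have hsumU : ∑ π : Equiv.Perm (Fin n), U2 n R π t1 t2
      = E2v * (∑ a : Fin n, ∑ b : Fin n, R a b) := by
    rw [Finset.sum_congr rfl fun π _ => hU2V π]
    rw [hinvsum V]
    exact hM1
  have hsumUsq : ∑ π : Equiv.Perm (Fin n), (U2 n R π t1 t2)^2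
      = ∑ π : Equiv.Perm (Fin n), (V π)^2 := by
    rw [Finset.sum_congr rfl fun π _ => by rw [hU2V π]]
    exact hinvsum (fun π => (V π)^2)
  -- variance formula
  rw [pvar_eq n (fun π => U2 n R π t1 t2)]
  rw [hsumUsq, hM2, hsumU]
  -- unfold target quantities
  have hr0 : (∑ i : Fin n, RING.Rbar n R i)
      = (∑ a : Fin n, ∑ b : Fin n, R a b) / ((n:ℝ) - 1) := by
    unfold RING.Rbar
    rw [Finset.sum_div]
  have hr1 : (∑ i : Fin n, (RING.Rbar n R i)^2)
      = (∑ a : Fin n, (∑ b : Fin n, R a b)^2) / ((n:ℝ) - 1)^2 := by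
    unfold RING.Rbar
    rw [Finset.sum_div]
    refine Finset.sum_congr rfl fun i _ => ?_
    rw [div_pow]
  unfold RING.A RING.B RING.rdsq RING.r0 RING.r1sq
  rw [hr0, hr1]
  rw [hE2v, hE3v, hE4v, cast_df2, cast_df3, cast_df4]
  rw [fact_cast2 hn, fact_cast3 hn, fact_cast4 hn]
  -- numeric finish
  have hnR : (4:ℝ) ≤ (n:ℝ) := by exact_mod_cast hn
  have hF : ((n-4).factorial : ℝ) ≠ 0 := Nat.cast_ne_zero.mpr (Nat.factorial_ne_zero _)
  have h0 : (n:ℝ) ≠ 0 := by linarith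
  have h1 : (n:ℝ) - 1 ≠ 0 := by intro h; nlinarith
  have h2 : (n:ℝ) - 2 ≠ 0 := by intro h; nlinarith
  have h3 : (n:ℝ) - 3 ≠ 0 := by intro h; nlinarith
  field_simp
  ring
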